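/- For the k-partite GHZ and W states (both in (ℂ²)^{⊗k}), the asymptotic SLOCC conversion rate from GHZ to W equals 1: ω(GHZ, W) = 1. Equivalently, the asymptotic rank of the k-partite W state is 2: lim_{n→∞} (1/n)·log₂ rk(W^{⊗n}) = 1. -/

import Mathlib

open scoped BigOperators

namespace Paper

def Restricts {k : ℕ} {ι κ : Fin k → Type} [∀ i, Fintype (ι i)] [∀ i, Fintype (κ i)]
    (ψ : ((i : Fin k) → ι i) → ℂ) (φ : ((i : Fin k) → κ i) → ℂ) : Prop :=
  ∃ A : (i : Fin k) → κ i → ι i → ℂ,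
    ∀ v, φ v = ∑ w : (i : Fin k) → ι i, (∏ i, A i (v i) (w i)) * ψ w

def pow {k : ℕ} {ι : Fin k → Type} (ψ : ((i : Fin k) → ι i) → ℂ) (m : ℕ) :
    ((i : Fin k) → (Fin m → ι i)) → ℂ :=
  fun v => ∏ j : Fin m, ψ (fun i => v i j)

def tprod {k : ℕ} {ι κ : Fin k → Type} (ψ : ((i : Fin k) → ι i) → ℂ)
    (φ : ((i : Fin k) → κ i) → ℂ) : ((i : Fin k) → ι i × κ i) → ℂ :=
  fun v => ψ (fun i => (v i).1) * φ (fun i => (v i).2)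

noncomputable def omegaN {k : ℕ} {ι κ : Fin k → Type} [∀ i, Fintype (ι i)] [∀ i, Fintype (κ i)]
    (ψ : ((i : Fin k) → ι i) → ℂ) (φ : ((i : Fin k) → κ i) → ℂ) (n : ℕ) : ℝ :=
  ((sInf {m : ℕ | Restricts (pow ψ m) (pow φ n)} : ℕ) : ℝ) / n

noncomputable def omega {k : ℕ} {ι κ : Fin k → Type} [∀ i, Fintype (ι i)] [∀ i, Fintype (κ i)]
    (ψ : ((i : Fin k) → ι i) → ℂ) (φ : ((i : Fin k) → κ i) → ℂ) : ℝ :=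
  ⨅ n : ℕ+, omegaN ψ φ n

def GHZ (k a : ℕ) : ((_ : Fin k) → Fin a) → ℂ :=
  fun v => if ∀ i j : Fin k, v i = v j then 1 else 0

def W (k : ℕ) : ((_ : Fin k) → Fin 2) → ℂ :=
  fun v => if (Finset.univ.filter fun i => v i = 1).card = 1 then 1 else 0

def rankLE {k : ℕ} {ι : Fin k → Type} (T : ((i : Fin k) → ι i) → ℂ) (r : ℕ) : Prop :=
  ∃ u : Fin r → (i : Fin k) → ι i → ℂ, ∀ v, T v = ∑ s : Fin r, ∏ i, u s i (v i)

noncomputable def trank {k : ℕ} {ι : Fin k → Type} (T : ((i : Fin k) → ι i) → ℂ) : ℕ :=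
  sInf {r | rankLE T r}

/-! ### Auxiliary lemmas -/

lemma rankLE_of_fintype {k : ℕ} {ι : Fin k → Type} (T : ((i : Fin k) → ι i) → ℂ)
    {S : Type} [Fintype S] (u : S → (i : Fin k) → ι i → ℂ)
    (h : ∀ v, T v = ∑ s : S, ∏ i, u s i (v i)) : rankLE T (Fintype.card S) := by
  refine ⟨fun s => u ((Fintype.equivFin S).symm s), fun v => ?_⟩
  rw [h v]
  exact (Equiv.sum_comp (Fintype.equivFin S).symm fun s => ∏ i, u s i (v i)).symm

lemma rankLE_mono {k : ℕ} (hk : 0 < k) {ι : Fin k → Type} {T : ((i : Fin k) → ι i) → ℂ}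
    {r r' : ℕ} (h : rankLE T r) (hrr : r ≤ r') : rankLE T r' := by
  obtain ⟨u, hu⟩ := h
  refine ⟨fun s i x => if hs : (s : ℕ) < r then u ⟨s, hs⟩ i x else 0, fun v => ?_⟩
  rw [hu v]
  have key : ∀ s : Fin r', (∏ i, (if hs : (s : ℕ) < r then u ⟨s, hs⟩ i (v i) else 0))
      = if hs : (s : ℕ) < r then ∏ i, u ⟨s, hs⟩ i (v i) else 0 := by
    intro s
    by_cases hs : (s : ℕ) < r
    · simp [hs]
    · simp only [hs, dif_neg, not_false_iff]
      exact Finset.prod_eq_zero (Finset.mem_univ ⟨0, hk⟩) rfl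
  simp_rw [key]
  have main : ∑ s : Fin r', (if hs : (s : ℕ) < r then ∏ i, u ⟨s, hs⟩ i (v i) else 0)
      = ∑ s : Fin r, ∏ i, u s i (v i) := by
    rw [← Finset.sum_subset (Finset.subset_univ (Finset.univ.map (Fin.castLEEmb hrr)))]
    · rw [Finset.sum_map]
      refine Finset.sum_congr rfl fun s _ => ?_
      have hlt : ((Fin.castLEEmb hrr s : Fin r') : ℕ) < r := by simpa using s.isLt
      rw [dif_pos hlt]
      have he : (⟨((Fin.castLEEmb hrr s : Fin r') : ℕ), hlt⟩ : Fin r) = s := Fin.ext (by simp)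
      rw [he]
    · intro s _ hs
      rw [dif_neg]
      intro hlt
      exact hs (Finset.mem_map.2 ⟨⟨(s : ℕ), hlt⟩, Finset.mem_univ _, by
        simp [Fin.castLEEmb, Fin.ext_iff]⟩)
  exact main.symm

lemma rankLE_of_restricts {k : ℕ} {ι κ : Fin k → Type} [∀ i, Fintype (ι i)] [∀ i, Fintype (κ i)]
    {ψ : ((i : Fin k) → ι i) → ℂ} {φ : ((i : Fin k) → κ i) → ℂ}
    (h : Restricts ψ φ) {r : ℕ} (hr : rankLE ψ r) : rankLE φ r := by
  obtain ⟨A, hA⟩ := h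
  obtain ⟨u, hu⟩ := hr
  refine ⟨fun s i x => ∑ y, A i x y * u s i y, fun v => ?_⟩
  rw [hA v]
  simp_rw [hu, Finset.mul_sum]
  rw [Finset.sum_comm]
  refine Finset.sum_congr rfl fun s _ => ?_
  rw [Fintype.prod_sum fun i y => A i (v i) y * u s i y]
  exact Finset.sum_congr rfl fun w _ => (Finset.prod_mul_distrib).symm

lemma pow_GHZ_apply (k m : ℕ) (w : (i : Fin k) → Fin m → Fin 2) :
    pow (GHZ k 2) m w = if ∀ i i' : Fin k, w i = w i' then 1 else 0 := by
  unfold pow GHZ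
  by_cases h : ∀ i i' : Fin k, w i = w i'
  · rw [if_pos h]
    exact Finset.prod_eq_one fun j _ => if_pos fun i i' => congrFun (h i i') j
  · rw [if_neg h]
    push_neg at h
    obtain ⟨i, i', hii⟩ := h
    obtain ⟨j, hj⟩ := Function.ne_iff.1 hii
    refine Finset.prod_eq_zero (Finset.mem_univ j) ?_
    rw [if_neg]
    intro hc
    exact hj (hc i i')

def ghzDec (k m : ℕ) : (Fin m → Fin 2) → (i : Fin k) → (Fin m → Fin 2) → ℂ :=
  fun c _ x => if x = c then 1 else 0

lemma pow_GHZ_dec (k m : ℕ) (hk : 0 < k) (v : (i : Fin k) → Fin m → Fin 2) :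
    pow (GHZ k 2) m v = ∑ c : Fin m → Fin 2, ∏ i, ghzDec k m c i (v i) := by
  rw [pow_GHZ_apply]
  unfold ghzDec
  simp_rw [Fintype.prod_boole]
  by_cases hall : ∀ i i' : Fin k, v i = v i'
  · rw [if_pos hall]
    have i0 : Fin k := ⟨0, hk⟩
    rw [Finset.sum_eq_single (v i0)]
    · rw [if_pos fun i => hall i i0]
    · intro c _ hc
      rw [if_neg]
      intro h
      exact hc ((h i0).symm)
    · intro h; exact absurd (Finset.mem_univ _) h
  · rw [if_neg hall]
    refine (Finset.sum_eq_zero fun c _ => ?_).symm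
    rw [if_neg]
    intro h
    exact hall fun i i' => (h i).trans (h i').symm

lemma rankLE_pow_GHZ (k m : ℕ) (hk : 0 < k) : rankLE (pow (GHZ k 2) m) (2 ^ m) := by
  have h := rankLE_of_fintype (pow (GHZ k 2) m) (ghzDec k m) (pow_GHZ_dec k m hk)
  simpa [Fintype.card_fun] using h

lemma restricts_of_rankLE {k m : ℕ} (hk : 0 < k) {κ : Fin k → Type} [∀ i, Fintype (κ i)]
    {φ : ((i : Fin k) → κ i) → ℂ} (h : rankLE φ (2 ^ m)) :
    Restricts (pow (GHZ k 2) m) φ := by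
  obtain ⟨u, hu⟩ := h
  set e : (Fin m → Fin 2) ≃ Fin (2 ^ m) :=
    (finFunctionFinEquiv : (Fin m → Fin 2) ≃ Fin (2 ^ m))
  refine ⟨fun i x c => u (e c) i x, fun v => ?_⟩
  have key : ∀ w : (i : Fin k) → Fin m → Fin 2,
      (∏ i, u (e (w i)) i (v i)) * pow (GHZ k 2) m w
      = if ∀ i i' : Fin k, w i = w i' then ∏ i, u (e (w i)) i (v i) else 0 := by
    intro w
    rw [pow_GHZ_apply, mul_ite, mul_one, mul_zero]
  simp_rw [key]
  rw [Finset.sum_ite, Finset.sum_const, smul_zero, add_zero]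
  have himg : (Finset.univ.filter fun w : (i : Fin k) → Fin m → Fin 2 =>
      ∀ i i' : Fin k, w i = w i') = Finset.univ.image (fun c : Fin m → Fin 2 => fun _ => c) := by
    ext w
    simp only [Finset.mem_filter, Finset.mem_univ, true_and, Finset.mem_image]
    constructor
    · intro h
      exact ⟨w ⟨0, hk⟩, by funext i; exact (h ⟨0, hk⟩ i).symm ▸ rfl⟩
    · rintro ⟨c, rfl⟩
      intro i i'; rfl
  rw [himg, Finset.sum_image (fun c _ c' _ h => congrFun h ⟨0, hk⟩)]
  rw [hu v]
  exact ((Equiv.sum_comp e fun s => ∏ i, u s i (v i))).symm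

/-! lower bound via flattening -/

def tv (k n : ℕ) (a b : Fin n → Fin 2) : (i : Fin k) → Fin n → Fin 2 :=
  fun i j => if (i : ℕ) = 0 then a j else if (i : ℕ) = 1 then (if b j = 0 then 1 else 0) else 0

lemma fin2_card_aux : ∀ x y : Fin 2,
    (((if x = 1 then 1 else 0) + (if y = 0 then 1 else 0) : ℕ) = 1 ↔ x = y) := by decide

lemma W_tv (k n : ℕ) (hk : 2 ≤ k) (a b : Fin n → Fin 2) :
    pow (W k) n (tv k n a b) = if a = b then 1 else 0 := by
  set i0 : Fin k := ⟨0, by omega⟩ with hi0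
  set i1 : Fin k := ⟨1, by omega⟩ with hi1
  have h01 : i0 ≠ i1 := by simp [hi0, hi1, Fin.ext_iff]
  have key : ∀ j : Fin n,
      (Finset.univ.filter fun i : Fin k => tv k n a b i j = 1).card
        = (if a j = 1 then 1 else 0) + (if b j = 0 then 1 else 0) := by
    intro j
    rw [Finset.card_filter]
    have hsub : ({i0, i1} : Finset (Fin k)) ⊆ Finset.univ := Finset.subset_univ _
    rw [← Finset.sum_subset hsub]
    · rw [Finset.sum_pair h01]
      have htv0 : tv k n a b i0 j = a j := by
        unfold tv; rw [if_pos (by simp [hi0])]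
      have htv1 : tv k n a b i1 j = (if b j = 0 then 1 else 0) := by
        unfold tv
        rw [if_neg (by simp [hi1]), if_pos (by simp [hi1])]
      have e0 : (if tv k n a b i0 j = 1 then (1:ℕ) else 0) = (if a j = 1 then 1 else 0) := by
        rw [htv0]
      have e1 : (if tv k n a b i1 j = 1 then (1:ℕ) else 0) = (if b j = 0 then 1 else 0) := by
        rw [htv1]
        by_cases hb : b j = 0
        · rw [if_pos hb, if_pos hb, if_pos rfl]
        · rw [if_neg hb, if_neg hb, if_neg (by decide)]
      rw [e0, e1]
    · intro i _ hi
      simp only [Finset.mem_insert, Finset.mem_singleton, not_or] at hi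
      have hv0 : (i : ℕ) ≠ 0 := fun h => hi.1 (Fin.ext (by simpa [hi0] using h))
      have hv1 : (i : ℕ) ≠ 1 := fun h => hi.2 (Fin.ext (by simpa [hi1] using h))
      rw [if_neg]
      unfold tv
      rw [if_neg hv0, if_neg hv1]
      decide
  have key2 : ∀ j : Fin n,
      (W k fun i => tv k n a b i j) = if a j = b j then 1 else 0 := by
    intro j
    unfold W
    rw [key j]
    by_cases hab : a j = b j
    · rw [if_pos ((fin2_card_aux (a j) (b j)).2 hab), if_pos hab]
    · rw [if_neg (fun h => hab ((fin2_card_aux (a j) (b j)).1 h)), if_neg hab]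
  show (∏ j, W k fun i => tv k n a b i j) = _
  simp_rw [key2]
  by_cases hab : a = b
  · rw [if_pos hab]
    exact Finset.prod_eq_one fun j _ => if_pos (congrFun hab j)
  · rw [if_neg hab]
    obtain ⟨j, hj⟩ := Function.ne_iff.1 hab
    exact Finset.prod_eq_zero (Finset.mem_univ j) (if_neg hj)

lemma pow_two_le_of_rankLE_W {k n r : ℕ} (hk : 2 ≤ k) (h : rankLE (pow (W k) n) r) :
    2 ^ n ≤ r := by
  obtain ⟨u, hu⟩ := h
  set i0 : Fin k := ⟨0, by omega⟩ with hi0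
  have hval : ∀ i : Fin k, i ≠ i0 → (i : ℕ) ≠ 0 := by
    intro i hi h
    exact hi (Fin.ext (by simpa [hi0] using h))
  set F : Matrix (Fin n → Fin 2) (Fin r) ℂ := fun a s => u s i0 a with hF
  set G : Matrix (Fin r) (Fin n → Fin 2) ℂ :=
    fun s b => ∏ i ∈ Finset.univ.erase i0, u s i (tv k n b b i) with hG
  have hfac : (1 : Matrix (Fin n → Fin 2) (Fin n → Fin 2) ℂ) = F * G := by
    ext a b
    rw [Matrix.one_apply, Matrix.mul_apply]
    have ha : tv k n a b i0 = a := by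
      funext j
      unfold tv
      rw [if_pos (by simp [hi0])]
    have hstep : ∀ s : Fin r, F a s * G s b = ∏ i, u s i (tv k n a b i) := by
      intro s
      have hrest : ∀ i ∈ Finset.univ.erase i0, u s i (tv k n b b i) = u s i (tv k n a b i) := by
        intro i hi
        have hi0' : (i : ℕ) ≠ 0 := hval i (Finset.mem_erase.1 hi).1
        congr 1
        funext j
        unfold tv
        rw [if_neg hi0', if_neg hi0']
      calc F a s * G s b
          = u s i0 (tv k n a b i0) * ∏ i ∈ Finset.univ.erase i0, u s i (tv k n a b i) := by
            show u s i0 a * (∏ i ∈ Finset.univ.erase i0, u s i (tv k n b b i)) = _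
            rw [Finset.prod_congr rfl hrest, ha]
        _ = ∏ i, u s i (tv k n a b i) :=
            Finset.mul_prod_erase Finset.univ (fun i => u s i (tv k n a b i))
              (Finset.mem_univ i0)
    simp_rw [hstep]
    rw [← hu (tv k n a b), W_tv k n hk a b]
  have hcard : Fintype.card (Fin n → Fin 2) = 2 ^ n := by simp [Fintype.card_fun]
  calc 2 ^ n = (1 : Matrix (Fin n → Fin 2) (Fin n → Fin 2) ℂ).rank := by
        rw [Matrix.rank_one, hcard]
    _ = (F * G).rank := by rw [hfac]
    _ ≤ F.rank := Matrix.rank_mul_le_left F G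
    _ ≤ Fintype.card (Fin r) := Matrix.rank_le_card_width F
    _ = r := Fintype.card_fin r

/-! upper bound via border rank / interpolation -/

def sgn : Fin 2 → ℂ := fun e => if e = 0 then 1 else -1

def base (e : Fin 2) (z : ℂ) (y : Fin 2) : ℂ :=
  if e = 0 then (if y = 1 then z else 1) else (if y = 0 then 1 else 0)

def colval (e : Fin 2) (z : ℂ) (w : ℕ) : ℂ :=
  if e = 0 then z ^ w else -(if w = 0 then 1 else 0)

lemma exists_interp (D : ℕ) (hD : 0 < D) : ∃ c : Fin D → ℂ,
    ∀ d : Fin D, (∑ t : Fin D, ((t : ℂ) + 1) ^ (d : ℕ) * c t) = if (d : ℕ) = 0 then 1 else 0 := by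
  set x : Fin D → ℂ := fun t => (t : ℂ) + 1 with hx
  set V : Matrix (Fin D) (Fin D) ℂ := (Matrix.vandermonde x).transpose with hV
  have hdet : V.det ≠ 0 := by
    rw [hV, Matrix.det_transpose, Matrix.det_vandermonde]
    refine Finset.prod_ne_zero_iff.2 fun i _ => Finset.prod_ne_zero_iff.2 fun j hj => ?_
    have hij : (i : ℕ) < (j : ℕ) := by simpa using Finset.mem_Ioi.1 hj
    have hne : (((i : ℕ) : ℂ)) ≠ (((j : ℕ) : ℂ)) := by
      exact_mod_cast Nat.ne_of_lt hij
    simp only [hx]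
    intro hcon
    exact hne (by linear_combination - hcon)
  have hunit : IsUnit V.det := isUnit_iff_ne_zero.2 hdet
  set d0 : Fin D := ⟨0, hD⟩ with hd0
  refine ⟨fun t => (V⁻¹.mulVec ((Pi.single d0 1 : Fin D → ℂ))) t, fun d => ?_⟩
  have hmv : (V.mulVec (V⁻¹.mulVec ((Pi.single d0 1 : Fin D → ℂ)))) d
      = (Pi.single d0 1 : Fin D → ℂ) d := by
    rw [Matrix.mulVec_mulVec, Matrix.mul_nonsing_inv V hunit, Matrix.one_mulVec]
  have hlhs : (V.mulVec (V⁻¹.mulVec ((Pi.single d0 1 : Fin D → ℂ)))) d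
      = ∑ t : Fin D, ((t : ℂ) + 1) ^ (d : ℕ) * (V⁻¹.mulVec ((Pi.single d0 1 : Fin D → ℂ))) t := by
    rw [Matrix.mulVec, dotProduct]
    rfl
  rw [← hlhs, hmv, Pi.single_apply]
  by_cases h : d = d0
  · rw [if_pos h, if_pos (by rw [h, hd0])]
  · rw [if_neg h, if_neg (fun hc => h (Fin.ext (by rw [hc, hd0])))]

lemma rankLE_pow_W (k n : ℕ) (hk : 2 ≤ k) :
    rankLE (pow (W k) n) ((n * (k - 1) + 1) * 2 ^ n) := by
  set D := n * (k - 1) + 1 with hD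
  have hDpos : 0 < D := by omega
  obtain ⟨c, hc⟩ := exists_interp D hDpos
  set x : Fin D → ℂ := fun t => (t : ℂ) + 1 with hx
  have hx0 : ∀ t, x t ≠ 0 := by
    intro t hcon
    have h1 : ((t : ℕ) : ℂ) = -1 := by
      simp only [hx] at hcon
      linear_combination hcon
    have h2 : ((t : ℕ) : ℝ) = -1 := by
      have := congrArg Complex.re h1
      simpa using this
    linarith [Nat.cast_nonneg (α := ℝ) (t : ℕ)]
  set c' : Fin D → ℂ := fun t => c t / x t ^ n with hc'
  set i0 : Fin k := ⟨0, by omega⟩ with hi0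
  set wt : ((i : Fin k) → Fin n → Fin 2) → Fin n → ℕ :=
    fun v j => (Finset.univ.filter fun i => v i j = 1).card with hwt
  have interp : ∀ N : ℕ, n ≤ N → N ≤ n * k →
      (∑ t, c' t * x t ^ N) = if N = n then 1 else 0 := by
    intro N h1 h2
    have hnk : n * (k - 1) + n = n * k := by
      have hk1 : k - 1 + 1 = k := by omega
      calc n * (k - 1) + n = n * ((k - 1) + 1) := by ring
        _ = n * k := by rw [hk1]
    have hNn : N - n < D := by omega
    have heq : ∀ t, c' t * x t ^ N = x t ^ (N - n) * c t := by
      intro t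
      have hsplit : x t ^ N = x t ^ n * x t ^ (N - n) := by
        rw [← pow_add]
        congr 1
        omega
      rw [hc']
      simp only
      rw [hsplit, ← mul_assoc, div_mul_cancel₀ _ (pow_ne_zero n (hx0 t)), mul_comm]
    simp_rw [heq]
    have h3 : (∑ t : Fin D, ((t : ℂ) + 1) ^ (N - n) * c t) = if N - n = 0 then 1 else 0 := by
      simpa using hc ⟨N - n, hNn⟩
    simp only [hx]
    rw [h3]
    by_cases hN : N = n
    · rw [if_pos (by omega), if_pos hN]
    · rw [if_neg (by omega), if_neg hN]
  set u : (Fin D × (Fin n → Fin 2)) → (i : Fin k) → (Fin n → Fin 2) → ℂ :=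
    fun s i y => (if i = i0 then c' s.1 * ∏ j, sgn (s.2 j) else 1)
      * ∏ j, base (s.2 j) (x s.1) (y j) with hu
  have main : ∀ v, pow (W k) n v = ∑ s : Fin D × (Fin n → Fin 2), ∏ i, u s i (v i) := by
    intro v
    have fin2aux : ∀ y : Fin 2, y ≠ 0 ↔ y = 1 := by decide
    have col : ∀ (e : Fin 2) (t : Fin D) (j : Fin n),
        sgn e * ∏ i, base e (x t) (v i j) = colval e (x t) (wt v j) := by
      intro e t j
      by_cases he : e = 0
      · subst he
        have hb : ∀ y, base 0 (x t) y = if y = 1 then x t else 1 := fun y => if_pos rfl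
        have hs : sgn 0 = 1 := if_pos rfl
        have hcv : colval 0 (x t) (wt v j) = x t ^ (wt v j) := if_pos rfl
        simp only [hb]
        rw [hs, one_mul, hcv]
        rw [Finset.prod_ite, Finset.prod_const, Finset.prod_const_one, mul_one, hwt]
      · have hb : ∀ y, base e (x t) y = if y = 0 then 1 else 0 := fun y => if_neg he
        have hs : sgn e = -1 := if_neg he
        have hcv : colval e (x t) (wt v j) = -(if wt v j = 0 then 1 else 0) := if_neg he
        simp only [hb]
        rw [hs, hcv, neg_one_mul, neg_inj]
        by_cases hz : ∀ i, v i j = 0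
        · rw [if_pos]
          · exact Finset.prod_eq_one fun i _ => if_pos (hz i)
          · rw [hwt]
            simp only [Finset.card_eq_zero, Finset.filter_eq_empty_iff]
            intro i _
            rw [hz i]
            decide
        · push_neg at hz
          obtain ⟨i, hi⟩ := hz
          have hterm : (if v i j = 0 then (1:ℂ) else 0) = 0 := if_neg hi
          rw [Finset.prod_eq_zero (Finset.mem_univ i) hterm, if_neg]
          rw [hwt]
          intro hcard
          have hmem : i ∈ Finset.univ.filter fun i => v i j = 1 :=
            Finset.mem_filter.2 ⟨Finset.mem_univ i, (fin2aux (v i j)).1 hi⟩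
          rw [Finset.card_eq_zero.1 hcard] at hmem
          exact absurd hmem (Finset.notMem_empty i)
    have step1 : ∀ s : Fin D × (Fin n → Fin 2),
        (∏ i, u s i (v i)) = c' s.1 * ∏ j, colval (s.2 j) (x s.1) (wt v j) := by
      intro s
      calc ∏ i, u s i (v i)
          = (∏ i, (if i = i0 then c' s.1 * ∏ j, sgn (s.2 j) else 1))
            * ∏ i, ∏ j, base (s.2 j) (x s.1) (v i j) := by
            rw [← Finset.prod_mul_distrib]
        _ = (c' s.1 * ∏ j, sgn (s.2 j)) * ∏ j, ∏ i, base (s.2 j) (x s.1) (v i j) := by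
            rw [Finset.prod_ite_eq' Finset.univ i0
              (fun _ => c' s.1 * ∏ j, sgn (s.2 j)), if_pos (Finset.mem_univ i0),
              Finset.prod_comm]
        _ = c' s.1 * ∏ j, (sgn (s.2 j) * ∏ i, base (s.2 j) (x s.1) (v i j)) := by
            rw [Finset.prod_mul_distrib]
            ring
        _ = c' s.1 * ∏ j, colval (s.2 j) (x s.1) (wt v j) := by
            rw [Finset.prod_congr rfl fun j _ => col (s.2 j) s.1 j]
    have step2 : (∑ s : Fin D × (Fin n → Fin 2), ∏ i, u s i (v i))
        = ∑ t, c' t * ∏ j, (x t ^ (wt v j) - (if wt v j = 0 then 1 else 0)) := by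
      rw [Fintype.sum_prod_type]
      refine Finset.sum_congr rfl fun t _ => ?_
      rw [Finset.sum_congr rfl fun η _ => step1 (t, η)]
      show (∑ η : Fin n → Fin 2, c' t * ∏ j, colval (η j) (x t) (wt v j)) = _
      rw [← Finset.mul_sum]
      congr 1
      rw [← Fintype.prod_sum fun j e => colval e (x t) (wt v j)]
      refine Finset.prod_congr rfl fun j _ => ?_
      rw [Fin.sum_univ_two]
      unfold colval
      rw [if_pos rfl, if_neg (by decide : ¬(1 : Fin 2) = 0)]
      ring
    have hpowW : pow (W k) n v = ∏ j, (if wt v j = 1 then (1:ℂ) else 0) := rfl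
    rw [step2, hpowW]
    by_cases hz : ∃ j, wt v j = 0
    · obtain ⟨j0, hj0⟩ := hz
      have hterm1 : (if wt v j0 = 1 then (1:ℂ) else 0) = 0 := by rw [hj0]; norm_num
      have hterm2 : ∀ t, (x t ^ (wt v j0) - (if wt v j0 = 0 then 1 else 0)) = 0 := by
        intro t
        rw [hj0, if_pos rfl, _root_.pow_zero, sub_self]
      rw [Finset.prod_eq_zero (Finset.mem_univ j0) hterm1]
      refine (Finset.sum_eq_zero fun t _ => ?_).symm
      rw [Finset.prod_eq_zero (Finset.mem_univ j0) (hterm2 t), mul_zero]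
    · push_neg at hz
      have hone : ∀ j, 1 ≤ wt v j := fun j => Nat.one_le_iff_ne_zero.2 (hz j)
      have hprodpow : ∀ t : Fin D, (∏ j, (x t ^ (wt v j) - (if wt v j = 0 then 1 else 0)))
          = x t ^ (∑ j, wt v j) := by
        intro t
        rw [← Finset.prod_pow_eq_pow_sum]
        exact Finset.prod_congr rfl fun j _ => by rw [if_neg (hz j), sub_zero]
      simp_rw [hprodpow]
      set N := ∑ j, wt v j with hN
      have hn1 : n ≤ N := by
        calc n = ∑ _j : Fin n, 1 := by simp
          _ ≤ N := Finset.sum_le_sum fun j _ => hone j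
      have hn2 : N ≤ n * k := by
        calc N ≤ ∑ _j : Fin n, k := Finset.sum_le_sum fun j _ => by
              rw [hwt]
              exact (Finset.card_filter_le _ _).trans (by simp)
          _ = n * k := by simp [Finset.sum_const, mul_comm]
      rw [interp N hn1 hn2]
      by_cases hNn : N = n
      · rw [if_pos hNn]
        have hall : ∀ j, wt v j = 1 := by
          have hsum : (∑ j, wt v j) = (∑ j, (wt v j - 1)) + n := by
            have hj1 : ∀ j : Fin n, wt v j = (wt v j - 1) + 1 := fun j => by
              have := hone j; omega
            calc (∑ j, wt v j) = ∑ j, ((wt v j - 1) + 1) :=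
                Finset.sum_congr rfl fun j _ => hj1 j
              _ = (∑ j, (wt v j - 1)) + n := by
                rw [Finset.sum_add_distrib]
                simp
          have hsum0 : (∑ j, (wt v j - 1)) = 0 := by omega
          intro j
          have h4 := (Finset.sum_eq_zero_iff.1 hsum0) j (Finset.mem_univ j)
          have := hone j
          omega
        exact Finset.prod_eq_one fun j _ => if_pos (hall j)
      · rw [if_neg hNn]
        have hex : ∃ j, wt v j ≠ 1 := by
          by_contra hcon
          push_neg at hcon
          exact hNn (by rw [hN]; simp [hcon])
        obtain ⟨j, hj⟩ := hex
        have hterm : (if wt v j = 1 then (1:ℂ) else 0) = 0 := if_neg hj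
        exact Finset.prod_eq_zero (f := fun j => if wt v j = 1 then (1:ℂ) else 0)
          (Finset.mem_univ j) hterm
  have hr := rankLE_of_fintype (pow (W k) n) u main
  have hcard : Fintype.card (Fin D × (Fin n → Fin 2)) = D * 2 ^ n := by
    simp [Fintype.card_prod, Fintype.card_fun]
  rw [hcard] at hr
  exact hr

/-! ### analytic helpers -/

lemma clog_le_logb (M : ℕ) (hM : 1 ≤ M) :
    (Nat.clog 2 M : ℝ) ≤ Real.logb 2 M + 1 := by
  rcases eq_or_lt_of_le hM with h1 | h1
  · rw [← h1]
    norm_num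
  · have hq : 0 < Nat.clog 2 M := Nat.clog_pos one_lt_two h1
    have hlt : 2 ^ (Nat.clog 2 M - 1) < M := Nat.pow_pred_clog_lt_self one_lt_two h1
    have h2 : ((2:ℝ) ^ (Nat.clog 2 M - 1)) < (M : ℝ) := by exact_mod_cast hlt
    have h3 := Real.logb_lt_logb (b := 2) one_lt_two (by positivity) h2
    rw [Real.logb_pow, Real.logb_self_eq_one one_lt_two, mul_one] at h3
    have h4 : ((Nat.clog 2 M - 1 : ℕ) : ℝ) = (Nat.clog 2 M : ℝ) - 1 := by
      rw [Nat.cast_sub hq]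
      norm_num
    rw [h4] at h3
    linarith

lemma tendsto_ub (k : ℕ) (hk : 1 ≤ k) :
    Filter.Tendsto (fun n : ℕ => (Real.logb 2 ((n : ℝ) * (k : ℝ)) + 1) / n)
      Filter.atTop (nhds 0) := by
  have hkpos : (0:ℝ) < (k : ℝ) := by exact_mod_cast hk
  have hlog : Filter.Tendsto (fun x : ℝ => Real.log x / x) Filter.atTop (nhds 0) :=
    Real.isLittleO_log_id_atTop.tendsto_div_nhds_zero
  have hnk : Filter.Tendsto (fun n : ℕ => (n : ℝ) * (k : ℝ)) Filter.atTop Filter.atTop :=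
    tendsto_natCast_atTop_atTop.atTop_mul_const hkpos
  have hA : Filter.Tendsto (fun n : ℕ => Real.log ((n:ℝ) * (k:ℝ)) / ((n:ℝ) * (k:ℝ)))
      Filter.atTop (nhds 0) := hlog.comp hnk
  have hB : Filter.Tendsto
      (fun n : ℕ => Real.log ((n:ℝ) * (k:ℝ)) / ((n:ℝ) * (k:ℝ)) * ((k:ℝ) / Real.log 2))
      Filter.atTop (nhds 0) := by
    simpa using hA.mul_const ((k:ℝ) / Real.log 2)
  have hC : Filter.Tendsto (fun n : ℕ => (1:ℝ) / n) Filter.atTop (nhds 0) :=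
    tendsto_one_div_atTop_nhds_zero_nat
  have hD := hB.add hC
  rw [add_zero] at hD
  refine Filter.Tendsto.congr' ?_ hD
  filter_upwards [Filter.eventually_ge_atTop 1] with n hn
  have hn0 : (0:ℝ) < n := by exact_mod_cast hn
  have hlog2 : Real.log 2 ≠ 0 := by
    have := Real.log_pos one_lt_two; linarith
  rw [Real.logb]
  field_simp

/-! ### the theorem -/

/-- ω(GHZ,W) = 1 for the k-partite GHZ and W states; equivalently the asymptotic
rank of the k-partite W state is 2. -/
theorem omega_GHZ_W (k : ℕ) (hk : 2 ≤ k) :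
    omega (GHZ k 2) (W k) = 1 ∧
    Filter.Tendsto (fun n : ℕ => Real.logb 2 (trank (pow (W k) n)) / n)
      Filter.atTop (nhds 1) := by
  have hk0 : 0 < k := by omega
  have hk1R : (1:ℝ) ≤ (k:ℝ) := by exact_mod_cast (by omega : 1 ≤ k)
  -- trank bounds
  have hWhigh : ∀ n : ℕ, trank (pow (W k) n) ≤ (n * (k - 1) + 1) * 2 ^ n :=
    fun n => Nat.sInf_le (rankLE_pow_W k n hk)
  have hWlow : ∀ n : ℕ, 2 ^ n ≤ trank (pow (W k) n) := by
    intro n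
    have hne : {r | rankLE (pow (W k) n) r}.Nonempty := ⟨_, rankLE_pow_W k n hk⟩
    exact pow_two_le_of_rankLE_W hk (Nat.sInf_mem hne)
  -- restriction set facts
  have hSlow : ∀ n m : ℕ, Restricts (pow (GHZ k 2) m) (pow (W k) n) → n ≤ m := by
    intro n m hres
    have h1 : rankLE (pow (W k) n) (2 ^ m) :=
      rankLE_of_restricts hres (rankLE_pow_GHZ k m hk0)
    have h2 := pow_two_le_of_rankLE_W hk h1
    exact (Nat.pow_le_pow_iff_right (le_refl 2)).1 h2
  have hDk : ∀ n : ℕ, 1 ≤ n → n * (k - 1) + 1 ≤ n * k := by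
    intro n hn
    have h1 : n * ((k - 1) + 1) = n * (k - 1) + n := Nat.mul_succ n (k - 1)
    have h2 : (k - 1) + 1 = k := by omega
    rw [h2] at h1
    omega
  have hSmem : ∀ n : ℕ,
      Restricts (pow (GHZ k 2) (n + Nat.clog 2 (n * (k - 1) + 1))) (pow (W k) n) := by
    intro n
    apply restricts_of_rankLE hk0
    refine rankLE_mono hk0 (rankLE_pow_W k n hk) ?_
    calc (n * (k - 1) + 1) * 2 ^ n
        ≤ 2 ^ (Nat.clog 2 (n * (k - 1) + 1)) * 2 ^ n :=
          Nat.mul_le_mul_right _ (Nat.le_pow_clog one_lt_two _)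
      _ = 2 ^ (n + Nat.clog 2 (n * (k - 1) + 1)) := by rw [← pow_add, Nat.add_comm]
  -- the upper bound sequence
  have hub := tendsto_ub k (by omega)
  have hT1 : Filter.Tendsto (fun n : ℕ => 1 + (Real.logb 2 ((n:ℝ) * (k:ℝ)) + 1) / n)
      Filter.atTop (nhds 1) := by
    have := (tendsto_const_nhds (x := (1:ℝ)) (f := Filter.atTop (α := ℕ))).add hub
    simpa using this
  -- key real bound for n ≥ 1
  have hbound : ∀ n : ℕ, 1 ≤ n →
      ((Nat.clog 2 (n * (k - 1) + 1) : ℝ)) ≤ Real.logb 2 ((n:ℝ) * (k:ℝ)) + 1 := by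
    intro n hn
    refine (clog_le_logb _ (by omega)).trans ?_
    have h1 : ((n * (k - 1) + 1 : ℕ) : ℝ) ≤ (n:ℝ) * (k:ℝ) := by
      have h0 := hDk n hn
      have h0' : ((n * (k - 1) + 1 : ℕ) : ℝ) ≤ ((n * k : ℕ) : ℝ) := by exact_mod_cast h0
      simpa [Nat.cast_mul] using h0'
    have h2 : (0:ℝ) < ((n * (k - 1) + 1 : ℕ) : ℝ) := by positivity
    have := Real.logb_le_logb_of_le (b := 2) one_lt_two h2 h1
    linarith
  -- part 1
  have hbdd : BddBelow (Set.range fun n : ℕ+ => omegaN (GHZ k 2) (W k) (n : ℕ)) := by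
    refine ⟨0, fun y hy => ?_⟩
    obtain ⟨n, rfl⟩ := hy
    unfold omegaN
    positivity
  have hge : (1:ℝ) ≤ omega (GHZ k 2) (W k) := by
    refine le_ciInf fun n => ?_
    unfold omegaN
    have hne : sInf {m : ℕ | Restricts (pow (GHZ k 2) m) (pow (W k) (n:ℕ))}
        ∈ {m : ℕ | Restricts (pow (GHZ k 2) m) (pow (W k) (n:ℕ))} :=
      Nat.sInf_mem ⟨_, hSmem (n:ℕ)⟩
    have hlow := hSlow (n:ℕ) _ hne
    have hnpos : (0:ℝ) < ((n:ℕ):ℝ) := by exact_mod_cast n.pos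
    rw [le_div_iff₀ hnpos, one_mul]
    exact_mod_cast hlow
  have hle : omega (GHZ k 2) (W k) ≤ 1 := by
    have hev : ∀ᶠ n : ℕ in Filter.atTop,
        omega (GHZ k 2) (W k) ≤ 1 + (Real.logb 2 ((n:ℝ) * (k:ℝ)) + 1) / n := by
      filter_upwards [Filter.eventually_ge_atTop 1] with n hn
      have hnpos : 0 < n := hn
      have h1 : omega (GHZ k 2) (W k) ≤ omegaN (GHZ k 2) (W k) n :=
        ciInf_le hbdd (⟨n, hnpos⟩ : ℕ+)
      refine h1.trans ?_
      unfold omegaN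
      have hnposR : (0:ℝ) < (n:ℝ) := by exact_mod_cast hnpos
      have hsle : sInf {m : ℕ | Restricts (pow (GHZ k 2) m) (pow (W k) n)}
          ≤ n + Nat.clog 2 (n * (k - 1) + 1) := Nat.sInf_le (hSmem n)
      have hsleR : ((sInf {m : ℕ | Restricts (pow (GHZ k 2) m) (pow (W k) n)} : ℕ) : ℝ)
          ≤ (n : ℝ) + (Nat.clog 2 (n * (k - 1) + 1) : ℝ) := by exact_mod_cast hsle
      have hb := hbound n hn
      rw [div_le_iff₀ hnposR]
      calc ((sInf {m : ℕ | Restricts (pow (GHZ k 2) m) (pow (W k) n)} : ℕ) : ℝ)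
          ≤ (n : ℝ) + (Nat.clog 2 (n * (k - 1) + 1) : ℝ) := hsleR
        _ ≤ (n : ℝ) + (Real.logb 2 ((n:ℝ) * (k:ℝ)) + 1) := by linarith
        _ = (1 + (Real.logb 2 ((n:ℝ) * (k:ℝ)) + 1) / n) * n := by
            rw [add_mul, one_mul, div_mul_cancel₀ _ hnposR.ne']
    exact ge_of_tendsto hT1 hev
  -- part 2
  have part2 : Filter.Tendsto (fun n : ℕ => Real.logb 2 (trank (pow (W k) n)) / n)
      Filter.atTop (nhds 1) := by
    have hlo : ∀ᶠ n : ℕ in Filter.atTop,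
        (1:ℝ) ≤ Real.logb 2 (trank (pow (W k) n)) / n := by
      filter_upwards [Filter.eventually_ge_atTop 1] with n hn
      have hnposR : (0:ℝ) < (n:ℝ) := by exact_mod_cast hn
      have h1 : ((2:ℝ) ^ n) ≤ (trank (pow (W k) n) : ℝ) := by exact_mod_cast hWlow n
      have h2 := Real.logb_le_logb_of_le (b := 2) one_lt_two (by positivity) h1
      rw [Real.logb_pow, Real.logb_self_eq_one one_lt_two, mul_one] at h2
      rw [le_div_iff₀ hnposR, one_mul]
      exact h2
    have hhi : ∀ᶠ n : ℕ in Filter.atTop,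
        Real.logb 2 (trank (pow (W k) n)) / n
          ≤ 1 + (Real.logb 2 ((n:ℝ) * (k:ℝ)) + 1) / n := by
      filter_upwards [Filter.eventually_ge_atTop 1] with n hn
      have hnposR : (0:ℝ) < (n:ℝ) := by exact_mod_cast hn
      have htr : (trank (pow (W k) n) : ℝ) ≤ ((n:ℝ) * (k:ℝ)) * 2 ^ n := by
        have h1 : trank (pow (W k) n) ≤ (n * k) * 2 ^ n :=
          (hWhigh n).trans (Nat.mul_le_mul_right _ (hDk n hn))
        calc (trank (pow (W k) n) : ℝ) ≤ ((n * k * 2 ^ n : ℕ) : ℝ) := by exact_mod_cast h1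
          _ = ((n:ℝ) * (k:ℝ)) * 2 ^ n := by push_cast; ring
      have htrpos : (0:ℝ) < (trank (pow (W k) n) : ℝ) := by
        have := hWlow n
        have h2 : (0:ℕ) < trank (pow (W k) n) := lt_of_lt_of_le (Nat.pow_pos
          (by norm_num : 0 < 2)) this
        exact_mod_cast h2
      have h2 := Real.logb_le_logb_of_le (b := 2) one_lt_two htrpos htr
      have hmul : Real.logb 2 (((n:ℝ) * (k:ℝ)) * 2 ^ n)
          = Real.logb 2 ((n:ℝ) * (k:ℝ)) + n := by
        rw [Real.logb_mul (by positivity) (by positivity), Real.logb_pow,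
          Real.logb_self_eq_one one_lt_two, mul_one]
      rw [hmul] at h2
      rw [div_le_iff₀ hnposR]
      calc Real.logb 2 (trank (pow (W k) n)) ≤ Real.logb 2 ((n:ℝ) * (k:ℝ)) + n := h2
        _ ≤ (1 + (Real.logb 2 ((n:ℝ) * (k:ℝ)) + 1) / n) * n := by
            rw [add_mul, one_mul, div_mul_cancel₀ _ hnposR.ne']
            linarith
    exact tendsto_of_tendsto_of_tendsto_of_le_of_le' tendsto_const_nhds hT1 hlo hhi
  exact ⟨le_antisymm hle hge, part2⟩

end Paper
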